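/- Let 0<p≤1, let ω be an unbounded admissible weight on ℤ^d satisfying the weak growth condition, and let (ω_n)_{n∈ℕ} be weights on ℤ^d such that 1 ≤ ω_{n+1}(x) ≤ ω_n(x) ≤ ω(x) for all n and x, ω_n → 1 uniformly on bounded subsets of ℤ^d as n→∞, and for each n there exists β_n > 0 with ω_n(x) = e^{−n} ω(x) whenever |x| ≥ β_n. Then for every matrix A ∈ A_{pω}, lim_{n→∞} ‖A‖_{pω_n} = ‖A‖_p. -/

import Mathlib

open scoped ENNReal NNReal
open Filter

/-- An admissible weight on `ℝ^d`: `ω(x) = e^{ρ(|x|)}` for some norm `|·|` on `ℝ^d` and a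
continuous concave `ρ : [0,∞) → [0,∞)` with `ρ(0) = 0`, satisfying the GRS-condition
`lim_n ω(nx)^{1/n} = 1` for every `x`. -/
def IsAdmissibleWeight {d : ℕ} (ω : (Fin d → ℝ) → ℝ) : Prop :=
  (∃ (N : (Fin d → ℝ) → ℝ) (ρ : ℝ → ℝ),
    (∀ x, 0 ≤ N x) ∧ (∀ x, N x = 0 ↔ x = 0) ∧
    (∀ x y, N (x + y) ≤ N x + N y) ∧ (∀ (c : ℝ) (x), N (c • x) = |c| * N x) ∧
    ContinuousOn ρ (Set.Ici 0) ∧ ConcaveOn ℝ (Set.Ici 0) ρ ∧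
    ρ 0 = 0 ∧ (∀ t : ℝ, 0 ≤ t → 0 ≤ ρ t) ∧
    (∀ x, ω x = Real.exp (ρ (N x)))) ∧
  (∀ x, Filter.Tendsto (fun n : ℕ => ω ((n : ℝ) • x) ^ ((n : ℝ)⁻¹)) Filter.atTop (nhds 1))

/-- The weak growth condition: `ω(x) ≥ C (1 + |x|)^δ` for some `C > 0`, `0 < δ ≤ 1`. -/
def WeakGrowth {d : ℕ} (ω : (Fin d → ℝ) → ℝ) : Prop :=
  ∃ C : ℝ, 0 < C ∧ ∃ δ : ℝ, 0 < δ ∧ δ ≤ 1 ∧ ∀ x, C * (1 + ‖x‖) ^ δ ≤ ω x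

/-- The canonical embedding `ℤ^d → ℝ^d`. -/
def zr {d : ℕ} (k : Fin d → ℤ) : Fin d → ℝ := fun i => (k i : ℝ)

/-- The weighted Schur-type `p`-norm of an infinite matrix `A = (a_{kl})_{k,l ∈ ℤ^d}` with
respect to a weight `ν` on `ℤ^d` (valued in `ℝ≥0∞`):
`max{ sup_k Σ_l |a_{kl}|^p ν(k−l)^p , sup_l Σ_k |a_{kl}|^p ν(k−l)^p }`. -/
noncomputable def mnorm {d : ℕ} (p : ℝ) (ν : (Fin d → ℤ) → ℝ)
    (A : (Fin d → ℤ) → (Fin d → ℤ) → ℂ) : ℝ≥0∞ :=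
  max (⨆ k : Fin d → ℤ, ∑' l : Fin d → ℤ,
        (‖A k l‖₊ : ℝ≥0∞) ^ p * ENNReal.ofReal (ν (k - l)) ^ p)
      (⨆ l : Fin d → ℤ, ∑' k : Fin d → ℤ,
        (‖A k l‖₊ : ℝ≥0∞) ^ p * ENNReal.ofReal (ν (k - l)) ^ p)

/-- Product of infinite matrices: `(A ⋆ B)_{kl} = Σ_j a_{kj} b_{jl}`. -/
noncomputable def matmul {d : ℕ} (A B : (Fin d → ℤ) → (Fin d → ℤ) → ℂ) :
    (Fin d → ℤ) → (Fin d → ℤ) → ℂ :=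
  fun k l => ∑' j : Fin d → ℤ, A k j * B j l

/-- `matpow A n` is the `(n+1)`-fold matrix power `A^{n+1}`. -/
noncomputable def matpow {d : ℕ} (A : (Fin d → ℤ) → (Fin d → ℤ) → ℂ) :
    ℕ → (Fin d → ℤ) → (Fin d → ℤ) → ℂ
  | 0 => A
  | n + 1 => matmul A (matpow A n)

/-- Monotonicity of `mnorm` in the weight. -/
lemma mnorm_mono_weight {d : ℕ} {p : ℝ} (hp : 0 ≤ p) {ν₁ ν₂ : (Fin d → ℤ) → ℝ}
    (h : ∀ x, ν₁ x ≤ ν₂ x) (A : (Fin d → ℤ) → (Fin d → ℤ) → ℂ) :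
    mnorm p ν₁ A ≤ mnorm p ν₂ A := by
  unfold mnorm
  refine max_le_max ?_ ?_ <;>
    exact iSup_mono fun k => ENNReal.tsum_le_tsum fun l =>
      mul_le_mul_right (ENNReal.rpow_le_rpow (ENNReal.ofReal_le_ofReal (h _)) hp) _

private lemma tsum_wt_le {I : Type*} (a w w' : I → ℝ≥0∞) (c e : ℝ≥0∞)
    (h : ∀ i, w i ≤ c + e * w' i) :
    ∑' i, a i * w i ≤ c * ∑' i, a i + e * ∑' i, a i * w' i := by
  calc ∑' i, a i * w i ≤ ∑' i, (a i * c + a i * (e * w' i)) := by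
        refine ENNReal.tsum_le_tsum fun i => ?_
        rw [← mul_add]; exact mul_le_mul_right (h i) _
    _ = c * ∑' i, a i + e * ∑' i, a i * w' i := by
        rw [ENNReal.tsum_add]
        congr 1
        · rw [ENNReal.tsum_mul_right, mul_comm]
        · rw [← ENNReal.tsum_mul_left]
          exact tsum_congr fun i => by ring

/-- If the weight values of `ν` are dominated by `c + e · μ^p`, then
`‖A‖_{pν} ≤ c ‖A‖_p + e ‖A‖_{pμ}`. -/
lemma mnorm_le_add {d : ℕ} {p : ℝ} (c e : ℝ≥0∞) (ν μ : (Fin d → ℤ) → ℝ)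
    (A : (Fin d → ℤ) → (Fin d → ℤ) → ℂ)
    (h : ∀ x, ENNReal.ofReal (ν x) ^ p ≤ c + e * ENNReal.ofReal (μ x) ^ p) :
    mnorm p ν A ≤ c * mnorm p (fun _ => 1) A + e * mnorm p μ A := by
  have h1 : ∀ k : Fin d → ℤ, (∑' l : Fin d → ℤ, (‖A k l‖₊ : ℝ≥0∞) ^ p)
      ≤ mnorm p (fun _ => (1:ℝ)) A := by
    intro k
    refine le_trans ?_ (le_max_left _ _)
    refine le_trans (le_of_eq ?_) (le_iSup (fun k : Fin d → ℤ => ∑' l : Fin d → ℤ,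
      (‖A k l‖₊ : ℝ≥0∞) ^ p * ENNReal.ofReal ((fun _ => (1:ℝ)) (k - l)) ^ p) k)
    simp
  have h1' : ∀ l : Fin d → ℤ, (∑' k : Fin d → ℤ, (‖A k l‖₊ : ℝ≥0∞) ^ p)
      ≤ mnorm p (fun _ => (1:ℝ)) A := by
    intro l
    refine le_trans ?_ (le_max_right _ _)
    refine le_trans (le_of_eq ?_) (le_iSup (fun l : Fin d → ℤ => ∑' k : Fin d → ℤ,
      (‖A k l‖₊ : ℝ≥0∞) ^ p * ENNReal.ofReal ((fun _ => (1:ℝ)) (k - l)) ^ p) l)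
    simp
  have h2 : ∀ k : Fin d → ℤ, (∑' l : Fin d → ℤ,
      (‖A k l‖₊ : ℝ≥0∞) ^ p * ENNReal.ofReal (μ (k - l)) ^ p) ≤ mnorm p μ A :=
    fun k => le_trans (le_iSup (fun k : Fin d → ℤ => ∑' l : Fin d → ℤ,
      (‖A k l‖₊ : ℝ≥0∞) ^ p * ENNReal.ofReal (μ (k - l)) ^ p) k) (le_max_left _ _)
  have h2' : ∀ l : Fin d → ℤ, (∑' k : Fin d → ℤ,
      (‖A k l‖₊ : ℝ≥0∞) ^ p * ENNReal.ofReal (μ (k - l)) ^ p) ≤ mnorm p μ A :=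
    fun l => le_trans (le_iSup (fun l : Fin d → ℤ => ∑' k : Fin d → ℤ,
      (‖A k l‖₊ : ℝ≥0∞) ^ p * ENNReal.ofReal (μ (k - l)) ^ p) l) (le_max_right _ _)
  refine max_le (iSup_le fun k => ?_) (iSup_le fun l => ?_)
  · exact (tsum_wt_le _ _ _ c e (fun l => h (k - l))).trans
      (add_le_add (mul_le_mul_right (h1 k) c) (mul_le_mul_right (h2 k) e))
  · exact (tsum_wt_le _ _ _ c e (fun k => h (k - l))).trans
      (add_le_add (mul_le_mul_right (h1' l) c) (mul_le_mul_right (h2' l) e))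

/-- Let `0 < p ≤ 1`, `ω` an unbounded admissible weight on `ℤ^d` with the weak growth
condition, and `(ω_n)` weights on `ℤ^d` with `1 ≤ ω_{n+1} ≤ ω_n ≤ ω`, `ω_n → 1` uniformly
on bounded sets, and `ω_n = e^{−n} ω` outside a ball of radius `β_n`.  Then for every
`A ∈ A_{pω}`, `lim_n ‖A‖_{pω_n} = ‖A‖_p`. -/
theorem tendsto_mnorm_auxiliary_weights
    {d : ℕ} (p : ℝ) (hp0 : 0 < p) (hp1 : p ≤ 1)
    (ω : (Fin d → ℝ) → ℝ) (hadm : IsAdmissibleWeight ω) (hwg : WeakGrowth ω)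
    (hunb : ∀ M : ℝ, ∃ x, M < ω x)
    (ωs : ℕ → (Fin d → ℤ) → ℝ)
    (hmono : ∀ n k, 1 ≤ ωs (n + 1) k ∧ ωs (n + 1) k ≤ ωs n k ∧ ωs n k ≤ ω (zr k))
    (hub : ∀ R : ℝ, 0 < R →
      TendstoUniformlyOn (fun n k => ωs n k) (fun _ => 1) atTop {k | ‖zr k‖ ≤ R})
    (htail : ∀ n : ℕ, ∃ β : ℝ, 0 < β ∧
      ∀ k : Fin d → ℤ, β ≤ ‖zr k‖ → ωs n k = Real.exp (-(n : ℝ)) * ω (zr k))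
    (A : (Fin d → ℤ) → (Fin d → ℤ) → ℂ)
    (hA : mnorm p (fun k => ω (zr k)) A < ⊤) :
    Tendsto (fun n : ℕ => mnorm p (ωs n) A) atTop (nhds (mnorm p (fun _ => 1) A)) := by
  obtain ⟨⟨N, ρ, hN0, _, _, _, _, _, _, hρnn, hω⟩, _⟩ := hadm
  set S := mnorm p (fun _ => (1:ℝ)) A with hSdef
  set W := mnorm p (fun k => ω (zr k)) A with hWdef
  have hω1 : ∀ x, 1 ≤ ω x := fun x => by
    rw [hω]; exact Real.one_le_exp (hρnn _ (hN0 _))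
  have hωs1 : ∀ n k, 1 ≤ ωs n k := fun n k =>
    le_trans (hmono n k).1 (hmono n k).2.1
  have hanti : ∀ k, Antitone fun n => ωs n k := fun k =>
    antitone_nat_of_succ_le fun n => (hmono n k).2.1
  have hSW : S ≤ W := mnorm_mono_weight hp0.le (fun x => hω1 _) A
  have hWt : W ≠ ⊤ := hA.ne
  have hSt : S ≠ ⊤ := (lt_of_le_of_lt hSW hA).ne
  have hlow : ∀ n, S ≤ mnorm p (ωs n) A := fun n =>
    mnorm_mono_weight hp0.le (fun x => hωs1 n x) A
  have main : ∀ ε : ℝ≥0∞, 0 < ε →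
      ∀ᶠ n in atTop, mnorm p (ωs n) A ≤ S + ε := by
    intro ε hε
    have hε2 : (0:ℝ≥0∞) < ε / 2 := ENNReal.half_pos hε.ne'
    -- choose δ > 0 with ofReal δ * S ≤ ε/2
    obtain ⟨δ, hδ0, hδS⟩ : ∃ δ : ℝ, 0 < δ ∧ ENNReal.ofReal δ * S ≤ ε / 2 := by
      rcases eq_or_ne S 0 with h0 | h0
      · exact ⟨1, one_pos, by simp [h0]⟩
      · set r : ℝ≥0∞ := min (ε / 2 / S) 1 with hr
        have hrt : r ≠ ⊤ := (min_le_right _ _).trans_lt ENNReal.one_lt_top |>.ne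
        have hr0 : 0 < r := lt_min (ENNReal.div_pos hε2.ne' hSt) one_pos
        refine ⟨r.toReal, ENNReal.toReal_pos hr0.ne' hrt, ?_⟩
        rw [ENNReal.ofReal_toReal hrt]
        calc r * S ≤ (ε / 2 / S) * S := mul_le_mul_left (min_le_left _ _) S
          _ = ε / 2 := ENNReal.div_mul_cancel h0 hSt
    -- choose m with ofReal (exp (-m)) ^ p * W ≤ ε/2
    obtain ⟨m, hm⟩ : ∃ m : ℕ,
        ENNReal.ofReal (Real.exp (-(m : ℝ))) ^ p * W ≤ ε / 2 := by
      have hre : ∀ m : ℕ, ENNReal.ofReal (Real.exp (-(m:ℝ))) ^ p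
          = ENNReal.ofReal (Real.exp (-(m:ℝ) * p)) := by
        intro m
        rw [ENNReal.ofReal_rpow_of_pos (Real.exp_pos _)]
        congr 1
        rw [← Real.exp_log (Real.rpow_pos_of_pos (Real.exp_pos _) p)]
        congr 1
        rw [Real.log_rpow (Real.exp_pos _), Real.log_exp, mul_comm]
      have ht : Tendsto (fun m : ℕ => Real.exp (-(m:ℝ) * p)) atTop (nhds 0) := by
        have : Tendsto (fun m : ℕ => (m:ℝ) * p) atTop atTop :=
          (tendsto_natCast_atTop_atTop (R := ℝ)).atTop_mul_const hp0
        exact Real.tendsto_exp_atBot.comp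
          ((tendsto_neg_atTop_atBot.comp this).congr fun m => by simp [Function.comp])
      have ht2 : Tendsto (fun m : ℕ =>
          ENNReal.ofReal (Real.exp (-(m:ℝ) * p)) * W) atTop (nhds 0) := by
        have := ENNReal.Tendsto.mul_const (ENNReal.tendsto_ofReal ht) (b := W) (Or.inr hWt)
        simpa using this
      have := (ht2.eventually (ge_mem_nhds hε2)).exists
      obtain ⟨m, hm⟩ := this
      exact ⟨m, by rw [hre]; exact hm⟩
    obtain ⟨β, hβ0, hβ⟩ := htail m
    have huu := Metric.tendstoUniformlyOn_iff.mp (hub β hβ0) δ hδ0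
    filter_upwards [huu, eventually_ge_atTop m] with n hn hnm
    -- pointwise weight bound
    have hpt : ∀ x : Fin d → ℤ, ENNReal.ofReal (ωs n x) ^ p ≤
        ENNReal.ofReal (1 + δ) ^ p +
          ENNReal.ofReal (Real.exp (-(m : ℝ))) ^ p * ENNReal.ofReal (ω (zr x)) ^ p := by
      intro x
      rcases le_or_gt ‖zr x‖ β with hx | hx
      · have h1 : ωs n x ≤ 1 + δ := by
          have hd := hn x hx
          rw [Real.dist_eq] at hd
          have := abs_lt.mp hd
          linarith [this.1]
        exact le_add_right (ENNReal.rpow_le_rpow (ENNReal.ofReal_le_ofReal h1) hp0.le)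
      · have h2 : ωs n x ≤ Real.exp (-(m:ℝ)) * ω (zr x) := by
          rw [← hβ x hx.le]
          exact hanti x hnm
        refine le_add_left ?_
        calc ENNReal.ofReal (ωs n x) ^ p
            ≤ ENNReal.ofReal (Real.exp (-(m:ℝ)) * ω (zr x)) ^ p :=
              ENNReal.rpow_le_rpow (ENNReal.ofReal_le_ofReal h2) hp0.le
          _ = ENNReal.ofReal (Real.exp (-(m:ℝ))) ^ p * ENNReal.ofReal (ω (zr x)) ^ p := by
              rw [ENNReal.ofReal_mul (Real.exp_pos _).le,
                ENNReal.mul_rpow_of_nonneg _ _ hp0.le]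
    have hc : ENNReal.ofReal (1 + δ) ^ p ≤ 1 + ENNReal.ofReal δ := by
      calc ENNReal.ofReal (1 + δ) ^ p ≤ ENNReal.ofReal (1 + δ) ^ (1:ℝ) :=
            ENNReal.rpow_le_rpow_of_exponent_le
              (by rw [← ENNReal.ofReal_one]
                  exact ENNReal.ofReal_le_ofReal (by linarith)) hp1
        _ = ENNReal.ofReal (1 + δ) := ENNReal.rpow_one _
        _ = 1 + ENNReal.ofReal δ := by
            rw [ENNReal.ofReal_add zero_le_one hδ0.le, ENNReal.ofReal_one]
    calc mnorm p (ωs n) A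
        ≤ ENNReal.ofReal (1 + δ) ^ p * S +
            ENNReal.ofReal (Real.exp (-(m : ℝ))) ^ p * W :=
          mnorm_le_add _ _ _ _ A hpt
      _ ≤ (1 + ENNReal.ofReal δ) * S + ε / 2 :=
          add_le_add (mul_le_mul_left hc S) hm
      _ = S + ENNReal.ofReal δ * S + ε / 2 := by rw [add_mul, one_mul]
      _ ≤ S + ε / 2 + ε / 2 := add_le_add (add_le_add_right hδS S) le_rfl
      _ = S + ε := by rw [add_assoc, ENNReal.add_halves]
  refine tendsto_order.2 ⟨fun b hb => Eventually.of_forall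
    fun n => lt_of_lt_of_le hb (hlow n), fun b hb => ?_⟩
  obtain ⟨r, hr0, hrb⟩ := ENNReal.lt_iff_exists_add_pos_lt.mp hb
  filter_upwards [main r (by exact_mod_cast hr0)] with n hn
  exact lt_of_le_of_lt hn hrb
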